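/- arXiv:2203.11488 — 5 statements merged into one kernel-verified Lean document; each statement's English description precedes it below -/
import Mathlib

section
/- Let q > 1 be a real number, and let α, β ∈ ℂ with αβ = q and α + β = c where c is real and |c| ≤ q + 1. Then for any w ∈ ℂ, the quantity |w - α|·|w - β| equals |1 - αw|·|1 - βw| multiplied by a factor which is > 1 if |w| < 1 and < 1 if |w| > 1. Equivalently: if |w| < 1 then |w - α|·|w - β| > |1 - αw|·|1 - βw|, and if |w| > 1 then |w - α|·|w - β| < |1 - αw|·|1 - βw|. -/
set_option maxHeartbeats 1000000 in
/-- Yoshida's lemma: for `q > 1` real, `α β : ℂ` with `αβ = q`, `α + β = c` real,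
`|c| ≤ q + 1`, and any `w : ℂ`, we have `|w-α||w-β| > |1-αw||1-βw|` if `|w| < 1`
and `|w-α||w-β| < |1-αw||1-βw|` if `|w| > 1`. -/
theorem stmt0 (q : ℝ) (hq : 1 < q) (α β : ℂ) (c : ℝ)
    (hprod : α * β = (q : ℂ)) (hsum : α + β = (c : ℂ)) (hc : |c| ≤ q + 1) (w : ℂ) :
    (‖w‖ < 1 →
      ‖1 - α * w‖ * ‖1 - β * w‖ <
        ‖w - α‖ * ‖w - β‖) ∧
    (1 < ‖w‖ →
      ‖w - α‖ * ‖w - β‖ <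
        ‖1 - α * w‖ * ‖1 - β * w‖) := by
  have key1 : ‖w - α‖ * ‖w - β‖
      = ‖w ^ 2 - (c : ℂ) * w + (q : ℂ)‖ := by
    rw [← norm_mul]
    congr 1
    have h : (w - α) * (w - β) = w ^ 2 - (α + β) * w + α * β := by ring
    rw [h, hsum, hprod]
  have key2 : ‖1 - α * w‖ * ‖1 - β * w‖
      = ‖(q : ℂ) * w ^ 2 - (c : ℂ) * w + 1‖ := by
    rw [← norm_mul]
    congr 1
    have h : (1 - α * w) * (1 - β * w) = (α * β) * w ^ 2 - (α + β) * w + 1 := by ring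
    rw [h, hsum, hprod]
  set x := w.re with hx
  set y := w.im with hy
  have hdiff : Complex.normSq (w ^ 2 - (c : ℂ) * w + (q : ℂ))
      - Complex.normSq ((q : ℂ) * w ^ 2 - (c : ℂ) * w + 1)
      = (x ^ 2 + y ^ 2 - 1) * (1 - q) * ((1 + q) * (x ^ 2 + y ^ 2 + 1) - 2 * c * x) := by
    simp [Complex.normSq_apply, Complex.add_re, Complex.add_im, Complex.sub_re,
      Complex.sub_im, Complex.mul_re, Complex.mul_im, Complex.ofReal_re,
      Complex.ofReal_im, pow_two]
    ring
  have habs : Complex.normSq w = x ^ 2 + y ^ 2 := by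
    simp [Complex.normSq_apply]; ring
  have hcx : 2 * c * x ≤ (q + 1) * (2 * |x|) := by
    calc 2 * c * x ≤ 2 * (|c| * |x|) := by
          have := abs_nonneg c
          have h := le_abs_self (c * x)
          rw [abs_mul] at h
          linarith
      _ ≤ (q + 1) * (2 * |x|) := by nlinarith [abs_nonneg x]
  have hB : ∀ _ : x ^ 2 + y ^ 2 ≠ 1, 0 < (1 + q) * (x ^ 2 + y ^ 2 + 1) - 2 * c * x := by
    intro hne
    have hxx : x ^ 2 = |x| ^ 2 := (sq_abs x).symm
    have hs : 0 < (|x| - 1) ^ 2 + y ^ 2 := by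
      rcases lt_or_eq_of_le (by positivity : (0:ℝ) ≤ (|x| - 1) ^ 2 + y ^ 2) with h' | h'
      · exact h'
      · exfalso
        have h1 : (|x| - 1) ^ 2 = 0 := by nlinarith [sq_nonneg (|x| - 1), sq_nonneg y]
        have h2 : y ^ 2 = 0 := by nlinarith [sq_nonneg (|x| - 1), sq_nonneg y]
        have h3 : |x| = 1 := by nlinarith
        apply hne
        nlinarith
    have hp : 0 < (1 + q) * ((|x| - 1) ^ 2 + y ^ 2) :=
      mul_pos (by linarith) hs
    clear hdiff key1 key2 habs hs hsum hprod
    nlinarith [hp]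
  constructor
  · intro hw
    have hn : x ^ 2 + y ^ 2 < 1 := by
      have := Complex.sq_norm w
      nlinarith [norm_nonneg w]
    have hpos := hB (by linarith)
    have hlt : Complex.normSq ((q : ℂ) * w ^ 2 - (c : ℂ) * w + 1)
        < Complex.normSq (w ^ 2 - (c : ℂ) * w + (q : ℂ)) := by
      have h1 : 0 < (1 - (x ^ 2 + y ^ 2)) * (q - 1) := mul_pos (by linarith) (by linarith)
      have hpp : 0 < (x ^ 2 + y ^ 2 - 1) * (1 - q) * ((1 + q) * (x ^ 2 + y ^ 2 + 1) - 2 * c * x) := by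
        nlinarith [mul_pos h1 hpos]
      linarith [hdiff, hpp]
    rw [key1, key2]
    have h1 := Complex.sq_norm (w ^ 2 - (c : ℂ) * w + (q : ℂ))
    have h2 := Complex.sq_norm ((q : ℂ) * w ^ 2 - (c : ℂ) * w + 1)
    have := norm_nonneg (w ^ 2 - (c : ℂ) * w + (q : ℂ))
    refine lt_of_pow_lt_pow_left₀ 2 this ?_
    rw [h1, h2]; exact hlt
  · intro hw
    have hn : 1 < x ^ 2 + y ^ 2 := by
      have := Complex.sq_norm w
      nlinarith [norm_nonneg w]
    have hpos := hB (by linarith)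
    have hlt : Complex.normSq (w ^ 2 - (c : ℂ) * w + (q : ℂ))
        < Complex.normSq ((q : ℂ) * w ^ 2 - (c : ℂ) * w + 1) := by
      have h1 : 0 < ((x ^ 2 + y ^ 2) - 1) * (q - 1) := mul_pos (by linarith) (by linarith)
      have hpp : 0 > (x ^ 2 + y ^ 2 - 1) * (1 - q) * ((1 + q) * (x ^ 2 + y ^ 2 + 1) - 2 * c * x) := by
        nlinarith [mul_pos h1 hpos]
      linarith [hdiff, hpp]
    rw [key1, key2]
    have h1 := Complex.sq_norm (w ^ 2 - (c : ℂ) * w + (q : ℂ))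
    have h2 := Complex.sq_norm ((q : ℂ) * w ^ 2 - (c : ℂ) * w + 1)
    have := norm_nonneg ((q : ℂ) * w ^ 2 - (c : ℂ) * w + 1)
    refine lt_of_pow_lt_pow_left₀ 2 this ?_
    rw [h1, h2]; exact hlt
end

section
/- Let Q be a real number with Q > 1 (think Q = q_{n_{m-1}}). Fix integers k ≥ 0 and ℓ ≥ 1, and define two formal power series in x: F₁(x) = (-Qx;Q)_k · ∑_{p=1}^{∞} [k+p choose k+1]_Q · (-x)^p/(Q^{ℓ+p} - 1) and F₂(x) = [k choose ℓ]_Q · (1+x)^{-1} - ∑_{s=0}^{k-ℓ} Q^{binom(s+1,2)+ℓs} [k choose ℓ+s]_Q x^s. Then F₂(x) = -((Q;Q)_{k+1} / ((Q;Q)_ℓ (Q;Q)_{k-ℓ})) · F₁(x), where [a choose b]_Q denotes the Q-binomial coefficient, equal to 0 if b < 0 or b > a, and (x;Q)_n is the Q-Pochhammer symbol. -/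
open Finset PowerSeries

/-- The `Q`-Pochhammer symbol `(x;Q)_n = ∏_{m=0}^{n-1} (1 - Q^m x)`. -/
noncomputable def qPoch (Q x : ℂ) (n : ℕ) : ℂ := ∏ m ∈ range n, (1 - Q ^ m * x)

/-- The `Q`-binomial coefficient `[a choose b]_Q`, equal to `0` when `b > a`. -/
noncomputable def qBinom (Q : ℂ) (a b : ℕ) : ℂ :=
  if b ≤ a then qPoch Q Q a / (qPoch Q Q b * qPoch Q Q (a - b)) else 0

namespace Eq102

variable (q : ℂ)

lemma qPoch_zero : qPoch q q 0 = 1 := by simp [qPoch]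

lemma qPoch_succ (n : ℕ) : qPoch q q (n+1) = qPoch q q n * (1 - q^(n+1)) := by
  rw [qPoch, prod_range_succ, ← qPoch, pow_succ]

lemma qPoch_ne_zero (hq : ∀ m : ℕ, 1 ≤ m → q ^ m ≠ 1) (n : ℕ) : qPoch q q n ≠ 0 := by
  rw [qPoch]
  apply prod_ne_zero_iff.2
  intro m _
  have := hq (m+1) (by omega)
  rw [pow_succ] at this
  intro h
  apply this
  have : q ^ m * q = 1 := by linear_combination -h
  exact this

lemma qBinom_zero (hq : ∀ m : ℕ, 1 ≤ m → q ^ m ≠ 1) (a : ℕ) : qBinom q a 0 = 1 := by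
  rw [qBinom, if_pos (Nat.zero_le a)]
  simp [qPoch_zero, div_self (qPoch_ne_zero q hq a)]

lemma qBinom_self (hq : ∀ m : ℕ, 1 ≤ m → q ^ m ≠ 1) (a : ℕ) : qBinom q a a = 1 := by
  rw [qBinom, if_pos le_rfl]
  simp [qPoch_zero, div_self (qPoch_ne_zero q hq a)]

lemma qBinom_symm (k p : ℕ) : qBinom q (k+p+1) (k+1) = qBinom q (k+p+1) p := by
  rw [qBinom, qBinom, if_pos (by omega), if_pos (by omega)]
  have h1 : k+p+1 - (k+1) = p := by omega
  have h2 : k+p+1 - p = k+1 := by omega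
  rw [h1, h2, mul_comm]

lemma pascal (hq : ∀ m : ℕ, 1 ≤ m → q ^ m ≠ 1) (n p : ℕ) :
    qBinom q (n+p+1) (p+1) = qBinom q (n+p) (p+1) + q^n * qBinom q (n+p) p := by
  rcases n with _ | n
  · rw [qBinom, qBinom, qBinom, if_pos (by omega), if_neg (by omega), if_pos (by omega)]
    simp only [Nat.sub_self, zero_add, pow_zero, one_mul]
    rw [qPoch_zero]
    rw [mul_one, mul_one, div_self (qPoch_ne_zero q hq _), div_self (qPoch_ne_zero q hq _)]
  · rw [qBinom, qBinom, qBinom, if_pos (by omega), if_pos (by omega), if_pos (by omega)]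
    have e1 : n+1+p+1 - (p+1) = n+1 := by omega
    have e2 : n+1+p - (p+1) = n := by omega
    have e3 : n+1+p - p = n+1 := by omega
    rw [e1, e2, e3]
    have hP := qPoch_ne_zero q hq
    rw [show n+1+p+1 = (n+1+p)+1 by ring, qPoch_succ, qPoch_succ q n, qPoch_succ q p]
    have hpn := qPoch_ne_zero q hq n
    have hpp := qPoch_ne_zero q hq p
    have h1 : (1 : ℂ) - q^(n+1) ≠ 0 := sub_ne_zero.mpr fun h => hq (n+1) (by omega) h.symm
    have h2 : (1 : ℂ) - q^(p+1) ≠ 0 := sub_ne_zero.mpr fun h => hq (p+1) (by omega) h.symm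
    field_simp
    ring


lemma ratio (hq : ∀ m : ℕ, 1 ≤ m → q ^ m ≠ 1) (k i : ℕ) :
    (q^(i+1) - 1) * q^(i+1) * qBinom q k (i+1) + (q^(i+1) - q^(k+1)) * qBinom q k i = 0 := by
  by_cases h : i + 1 ≤ k
  · obtain ⟨n, rfl⟩ : ∃ n, k = i+1+n := ⟨k - (i+1), by omega⟩
    rw [qBinom, qBinom, if_pos (by omega), if_pos (by omega)]
    have e1 : i+1+n - (i+1) = n := by omega
    have e2 : i+1+n - i = n+1 := by omega
    rw [e1, e2, qPoch_succ q i, qPoch_succ q n]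
    have hpn := qPoch_ne_zero q hq n
    have hpi := qPoch_ne_zero q hq i
    have hpk := qPoch_ne_zero q hq (i+1+n)
    have h1 : (1 : ℂ) - q^(i+1) ≠ 0 := sub_ne_zero.mpr fun h => hq (i+1) (by omega) h.symm
    have h2 : (1 : ℂ) - q^(n+1) ≠ 0 := sub_ne_zero.mpr fun h => hq (n+1) (by omega) h.symm
    field_simp
    ring
  · rw [qBinom, if_neg h]
    by_cases h' : i ≤ k
    · have : i = k := by omega
      subst this
      rw [show (q^(i+1) - q^(i+1)) = 0 by ring]
      ring
    · rw [qBinom, if_neg h']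
      ring


noncomputable def Rk (n : ℕ) : PowerSeries ℂ := ∏ m ∈ range n, (1 + PowerSeries.C (R := ℂ) (q^m) * X)

noncomputable def B (n : ℕ) : PowerSeries ℂ := PowerSeries.mk fun p => (-1)^p * qBinom q (n+p) p

lemma coeff_zero_lin (c : ℂ) (f : PowerSeries ℂ) :
    coeff (R := ℂ) 0 ((1 + PowerSeries.C (R := ℂ) c * X) * f) = coeff (R := ℂ) 0 f := by
  simp [coeff_zero_eq_constantCoeff, map_mul]

lemma coeff_succ_lin (c : ℂ) (f : PowerSeries ℂ) (n : ℕ) :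
    coeff (R := ℂ) (n+1) ((1 + PowerSeries.C (R := ℂ) c * X) * f) = coeff (R := ℂ) (n+1) f + c * coeff (R := ℂ) n f := by
  rw [add_mul, one_mul, map_add, mul_assoc, coeff_C_mul, coeff_succ_X_mul]

lemma coeff_zero_lin1 (f : PowerSeries ℂ) :
    coeff (R := ℂ) 0 ((1 + X) * f) = coeff (R := ℂ) 0 f := by
  simp [coeff_zero_eq_constantCoeff, map_mul]

lemma coeff_succ_lin1 (f : PowerSeries ℂ) (n : ℕ) :
    coeff (R := ℂ) (n+1) ((1 + X) * f) = coeff (R := ℂ) (n+1) f + coeff (R := ℂ) n f := by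
  rw [add_mul, one_mul, map_add, coeff_succ_X_mul]

lemma RB (hq : ∀ m : ℕ, 1 ≤ m → q ^ m ≠ 1) (n : ℕ) : Rk q (n+1) * B q n = 1 := by
  induction n with
  | zero =>
    rw [Rk, prod_range_one, pow_zero, B]
    ext N
    rcases N with _ | N
    · rw [coeff_zero_lin]
      simp [qBinom_zero q hq]
    · rw [coeff_succ_lin]
      simp only [coeff_mk, coeff_one, Nat.succ_ne_zero, if_false]
      rw [Nat.zero_add, Nat.zero_add, qBinom_self q hq, qBinom_self q hq]
      ring
  | succ n ih =>
    have step : (1 + PowerSeries.C (R := ℂ) (q^(n+1)) * X) * B q (n+1) = B q n := by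
      ext N
      rcases N with _ | N
      · rw [coeff_zero_lin]
        simp [B, qBinom_zero q hq]
      · rw [coeff_succ_lin]
        simp only [B, coeff_mk]
        have hp := pascal q hq (n+1) N
        rw [show n+1+N+1 = n+1+(N+1) by ring] at hp
        rw [show n+(N+1) = n+N+1 by ring, hp]
        ring
    rw [Rk, prod_range_succ, ← Rk, mul_assoc, step, ih]


variable (k l : ℕ)

noncomputable def Sser : PowerSeries ℂ := PowerSeries.mk fun p =>
  if p = 0 then 0 else (-1) ^ p * qBinom q (k + p) (k + 1) / (q ^ (l + p) - 1)

noncomputable def Dser : PowerSeries ℂ := PowerSeries.mk fun p =>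
  if p = 0 then 0 else (-1) ^ p * qBinom q (k + p) (k + 1)

lemma D_eq : Dser q k = -(X * B q (k+1)) := by
  ext N
  rcases N with _ | N
  · simp [Dser, B]
  · rw [Dser, coeff_mk, if_neg (Nat.succ_ne_zero N), map_neg, coeff_succ_X_mul, B, coeff_mk]
    rw [show k + (N+1) = k + N + 1 by ring, qBinom_symm q k N,
      show k + 1 + N = k + N + 1 by ring]
    ring

lemma SD (hq : ∀ m : ℕ, 1 ≤ m → q ^ m ≠ 1) (hl : 1 ≤ l) :
    PowerSeries.C (R := ℂ) (q^l) * rescale q (Sser q k l) - Sser q k l = Dser q k := by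
  ext N
  simp only [Sser, Dser, map_sub, coeff_C_mul, coeff_rescale, coeff_mk]
  rcases N with _ | N
  · simp
  · rw [if_neg (Nat.succ_ne_zero N), if_neg (Nat.succ_ne_zero N)]
    have h1 : q ^ (l + (N+1)) - 1 ≠ 0 := sub_ne_zero.mpr (hq (l + (N+1)) (by omega))
    field_simp
    ring

lemma RD (hq : ∀ m : ℕ, 1 ≤ m → q ^ m ≠ 1) : Rk q (k+2) * Dser q k = -X := by
  rw [D_eq, mul_neg, show k + 2 = (k+1)+1 by ring, mul_left_comm, RB q hq (k+1), mul_one]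

lemma rescale_one_add_CX (a c : ℂ) :
    rescale a (1 + PowerSeries.C (R := ℂ) c * X) = 1 + PowerSeries.C (R := ℂ) (c * a) * X := by
  ext N
  rw [coeff_rescale]
  rcases N with _ | _ | N <;>
    simp [coeff_one, coeff_C_mul, PowerSeries.coeff_X, mul_comm]

lemma rescale_Rk (n : ℕ) :
    rescale q (Rk q n) = ∏ m ∈ range n, (1 + PowerSeries.C (R := ℂ) (q^(m+1)) * X) := by
  rw [Rk, map_prod]
  refine prod_congr rfl fun m _ => ?_
  rw [rescale_one_add_CX, ← pow_succ]

lemma RkSucc' (n : ℕ) : (1 + X) * rescale q (Rk q (n+1)) = Rk q (n+2) := by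
  rw [rescale_Rk,
    show Rk q (n+2) = (∏ m ∈ range (n+1), (1 + PowerSeries.C (R := ℂ) (q^(m+1)) * X)) *
      (1 + PowerSeries.C (R := ℂ) (q^0) * X) from by rw [Rk, prod_range_succ']]
  rw [pow_zero, map_one, one_mul, mul_comm]

lemma Tfe (hq : ∀ m : ℕ, 1 ≤ m → q ^ m ≠ 1) (hl : 1 ≤ l) :
    PowerSeries.C (R := ℂ) (q^l) * ((1 + X) * rescale q (Rk q (k+1) * Sser q k l)) =
      (1 + PowerSeries.C (R := ℂ) (q^(k+1)) * X) * (Rk q (k+1) * Sser q k l) - X := by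
  rw [map_mul]
  have h1 : PowerSeries.C (R := ℂ) (q^l) * rescale q (Sser q k l) = Sser q k l + Dser q k := by
    linear_combination SD q k l hq hl
  have h2 := RkSucc' q k
  have h3 : Rk q (k+2) = Rk q (k+1) * (1 + PowerSeries.C (R := ℂ) (q^(k+1)) * X) := by
    rw [Rk, prod_range_succ]; rfl
  have h4 := RD q k hq
  linear_combination ((1 + X) * rescale q (Rk q (k+1))) * h1 +
    (Sser q k l + Dser q k) * h2 + (Sser q k l) * h3 + h4


noncomputable def Pser : PowerSeries ℂ := PowerSeries.mk fun s =>
  q ^ (s * (s + 1) / 2 + l * s) * qBinom q k (l + s)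

lemma tri (s : ℕ) : (s+1) * (s+2) / 2 = s * (s+1) / 2 + (s+1) := by
  rw [show (s+1)*(s+2) = s*(s+1) + (s+1)*2 by ring, Nat.add_mul_div_right _ _ (by norm_num)]

lemma Pfe (hq : ∀ m : ℕ, 1 ≤ m → q ^ m ≠ 1) :
    PowerSeries.C (R := ℂ) (q^l) * ((1 + PowerSeries.C (R := ℂ) q * X) * rescale q (Pser q k l)) -
      (1 + PowerSeries.C (R := ℂ) (q^(k+1)) * X) * Pser q k l =
      (PowerSeries.C (R := ℂ) (q^l) - 1) * PowerSeries.C (R := ℂ) (qBinom q k l) := by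
  ext N
  rcases N with _ | N
  · rw [map_sub, coeff_C_mul, coeff_zero_lin, coeff_zero_lin, coeff_rescale, sub_mul, one_mul,
      map_sub, ← map_mul, coeff_C, coeff_C]
    simp [Pser]
  · rw [map_sub, coeff_C_mul, coeff_succ_lin, coeff_succ_lin, coeff_rescale, coeff_rescale]
    simp only [Pser, coeff_mk]
    rw [sub_mul, one_mul, map_sub, ← map_mul, coeff_C, coeff_C, if_neg (Nat.succ_ne_zero N),
      if_neg (Nat.succ_ne_zero N)]
    have key := ratio q hq k (l + N)
    have e1 : (N+1) * (N+1+1) / 2 + l * (N+1) = (N * (N+1) / 2 + l * N) + (l + N + 1) := by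
      rw [show (N+1)*(N+1+1) = (N+1)*(N+2) by ring, tri]; ring
    rw [e1, show l + (N + 1) = l + N + 1 by omega]
    linear_combination (q ^ (N * (N+1) / 2 + l * N)) * key
  
lemma uniq (hq : ∀ m : ℕ, 1 ≤ m → q ^ m ≠ 1) (hl : 1 ≤ l) (F : PowerSeries ℂ)
    (h : PowerSeries.C (R := ℂ) (q^l) * ((1 + X) * rescale q F) =
      (1 + PowerSeries.C (R := ℂ) (q^(k+1)) * X) * F) : F = 0 := by
  ext N
  rw [map_zero]
  induction N with
  | zero =>
    have h0 := congrArg (coeff (R := ℂ) 0) h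
    rw [coeff_C_mul, coeff_zero_lin1, coeff_zero_lin, coeff_rescale, pow_zero, one_mul] at h0
    have hne : q ^ l - 1 ≠ 0 := sub_ne_zero.mpr (hq l hl)
    have : (q ^ l - 1) * coeff (R := ℂ) 0 F = 0 := by linear_combination h0
    exact (mul_eq_zero.1 this).resolve_left hne
  | succ N ih =>
    have h0 := congrArg (coeff (R := ℂ) (N+1)) h
    rw [coeff_C_mul, coeff_succ_lin1, coeff_succ_lin, coeff_rescale, coeff_rescale, ih] at h0
    have hne : q ^ (l + (N+1)) - 1 ≠ 0 := sub_ne_zero.mpr (hq (l + (N+1)) (by omega))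
    have : (q ^ (l + (N+1)) - 1) * coeff (R := ℂ) (N+1) F = 0 := by
      rw [pow_add]; linear_combination h0
    exact (mul_eq_zero.1 this).resolve_left hne


noncomputable def Wser : PowerSeries ℂ :=
  PowerSeries.C (R := ℂ) (qBinom q k l) - (1 + X) * Pser q k l

lemma rescale_C' (a b : ℂ) : rescale a (PowerSeries.C (R := ℂ) b) = PowerSeries.C (R := ℂ) b := by
  ext N
  rcases N with _ | N <;> simp [coeff_rescale, coeff_C]

lemma Wfe (hq : ∀ m : ℕ, 1 ≤ m → q ^ m ≠ 1) :
    PowerSeries.C (R := ℂ) (q^l) * ((1 + X) * rescale q (Wser q k l)) =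
      (1 + PowerSeries.C (R := ℂ) (q^(k+1)) * X) * Wser q k l +
        (1 - PowerSeries.C (R := ℂ) (q^(k+1))) * PowerSeries.C (R := ℂ) (qBinom q k l) * X := by
  have hres : rescale q (Wser q k l) =
      PowerSeries.C (R := ℂ) (qBinom q k l) - (1 + PowerSeries.C (R := ℂ) q * X) * rescale q (Pser q k l) := by
    rw [Wser, map_sub, map_mul, rescale_C', map_add, map_one, rescale_X]
  rw [hres, Wser]
  linear_combination (-(1 + X)) * Pfe q k l hq

lemma Psum (hlk : l ≤ k) :
    (∑ s ∈ range (k - l + 1),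
      PowerSeries.C (R := ℂ) (q ^ (s * (s + 1) / 2 + l * s) * qBinom q k (l + s)) * X ^ s) =
      Pser q k l := by
  ext N
  rw [Pser, coeff_mk, map_sum]
  simp only [coeff_C_mul, coeff_X_pow, mul_ite, mul_one, mul_zero]
  rw [Finset.sum_ite_eq (range (k - l + 1)) N]
  by_cases hN : N ∈ range (k - l + 1)
  · rw [if_pos hN]
  · rw [if_neg hN]
    have : ¬ (l + N ≤ k) := by simp [mem_range] at hN; omega
    rw [qBinom, if_neg this, mul_zero]

lemma key (hq : ∀ m : ℕ, 1 ≤ m → q ^ m ≠ 1) (hl : 1 ≤ l) (hlk : l ≤ k) :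
    Wser q k l = - PowerSeries.C (R := ℂ)
      (qPoch q q (k + 1) / (qPoch q q l * qPoch q q (k - l))) *
      (Rk q (k+1) * Sser q k l) := by
  set c := qPoch q q (k + 1) / (qPoch q q l * qPoch q q (k - l)) with hc
  have hcb : c = (1 - q^(k+1)) * qBinom q k l := by
    rw [hc, qBinom, if_pos hlk, qPoch_succ]
    ring
  have hCc : PowerSeries.C (R := ℂ) c =
      (1 - PowerSeries.C (R := ℂ) (q^(k+1))) * PowerSeries.C (R := ℂ) (qBinom q k l) := by
    rw [hcb, map_mul, map_sub, map_one]
  have hzero : Wser q k l + PowerSeries.C (R := ℂ) c * (Rk q (k+1) * Sser q k l) = 0 := by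
    apply uniq q k l hq hl
    rw [map_add (rescale q), map_mul (rescale q), rescale_C']
    linear_combination Wfe q k l hq + PowerSeries.C (R := ℂ) c * Tfe q k l hq hl - X * hCc
  linear_combination hzero

end Eq102

/-- The key `q`-series lemma (eq102): with
`F₁(x) = (-Qx;Q)_k ∑_{p≥1} [k+p choose k+1]_Q (-x)^p/(Q^{ℓ+p}-1)` and
`F₂(x) = [k choose ℓ]_Q (1+x)⁻¹ - ∑_{s=0}^{k-ℓ} Q^{C(s+1,2)+ℓs} [k choose ℓ+s]_Q x^s`,
one has `F₂ = -((Q;Q)_{k+1}/((Q;Q)_ℓ (Q;Q)_{k-ℓ})) F₁` (where the coefficient is read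
as `0` if `ℓ > k`). -/
theorem stmt5 (Q : ℝ) (hQ : 1 < Q) (k ℓ : ℕ) (hℓ : 1 ≤ ℓ) :
    (PowerSeries.C (R := ℂ) (qBinom (Q : ℂ) k ℓ) * (1 + PowerSeries.X : PowerSeries ℂ)⁻¹ -
        ∑ s ∈ range (k - ℓ + 1),
          PowerSeries.C (R := ℂ) ((Q : ℂ) ^ (s * (s + 1) / 2 + ℓ * s) * qBinom (Q : ℂ) k (ℓ + s)) *
            PowerSeries.X ^ s) =
      - PowerSeries.C (R := ℂ)
          (if ℓ ≤ k then
            qPoch (Q : ℂ) (Q : ℂ) (k + 1) /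
              (qPoch (Q : ℂ) (Q : ℂ) ℓ * qPoch (Q : ℂ) (Q : ℂ) (k - ℓ))
          else 0) *
        ((∏ m ∈ range k, (1 + PowerSeries.C (R := ℂ) ((Q : ℂ) ^ (m + 1)) * PowerSeries.X)) *
          PowerSeries.mk fun p =>
            if p = 0 then 0
            else (-1) ^ p * qBinom (Q : ℂ) (k + p) (k + 1) / ((Q : ℂ) ^ (ℓ + p) - 1)) := by
  have hq : ∀ m : ℕ, 1 ≤ m → (Q : ℂ) ^ m ≠ 1 := by
    intro m hm h
    have h2 : (Q : ℝ) ^ m = 1 := by exact_mod_cast h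
    have h3 : (1 : ℝ) < Q ^ m := one_lt_pow₀ hQ (by omega)
    linarith
  by_cases hlk : ℓ ≤ k
  · rw [if_pos hlk]
    have hS : (PowerSeries.mk fun p =>
        if p = 0 then 0
        else (-1) ^ p * qBinom (Q : ℂ) (k + p) (k + 1) / ((Q : ℂ) ^ (ℓ + p) - 1)) =
        Eq102.Sser (Q : ℂ) k ℓ := rfl
    rw [hS, Eq102.Psum (Q : ℂ) k ℓ hlk]
    have hinv : ((1 + X : PowerSeries ℂ)) * (1 + X : PowerSeries ℂ)⁻¹ = 1 :=
      PowerSeries.mul_inv_cancel _ (by simp)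
    have h1X : ((1 + X : PowerSeries ℂ)) ≠ 0 := by
      intro h
      rw [h, zero_mul] at hinv
      exact zero_ne_one hinv
    apply mul_left_cancel₀ h1X
    have hRk : (1 + X) * (∏ m ∈ range k, (1 + PowerSeries.C (R := ℂ) ((Q : ℂ) ^ (m + 1)) * X)) =
        Eq102.Rk (Q : ℂ) (k + 1) := by
      rw [Eq102.Rk,
        show (∏ m ∈ range (k+1), (1 + PowerSeries.C (R := ℂ) ((Q:ℂ) ^ m) * X)) =
          (∏ m ∈ range k, (1 + PowerSeries.C (R := ℂ) ((Q:ℂ) ^ (m+1)) * X)) *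
            (1 + PowerSeries.C (R := ℂ) ((Q:ℂ) ^ 0) * X) from prod_range_succ' _ _,
        pow_zero, map_one, one_mul, mul_comm]
    have expand : (1 + X) * (PowerSeries.C (R := ℂ) (qBinom (Q : ℂ) k ℓ) * (1 + X : PowerSeries ℂ)⁻¹ -
        Eq102.Pser (Q : ℂ) k ℓ) = Eq102.Wser (Q : ℂ) k ℓ := by
      rw [Eq102.Wser, mul_sub, mul_left_comm, hinv, mul_one]
    rw [expand, Eq102.key (Q : ℂ) k ℓ hq hℓ hlk]
    linear_combination (PowerSeries.C (R := ℂ)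
      (qPoch (Q : ℂ) (Q : ℂ) (k + 1) /
        (qPoch (Q : ℂ) (Q : ℂ) ℓ * qPoch (Q : ℂ) (Q : ℂ) (k - ℓ))) *
      Eq102.Sser (Q : ℂ) k ℓ) * hRk
  · rw [if_neg hlk, map_zero, neg_zero, zero_mul]
    rw [show k - ℓ + 1 = 1 by omega, Finset.sum_range_one]
    have hb : qBinom (Q : ℂ) k ℓ = 0 := by rw [qBinom, if_neg hlk]
    rw [show ℓ + 0 = ℓ from rfl, hb]
    simp
end

section
/- Let Q > 1 be real and k, ℓ integers with k ≥ 0, ℓ ≥ 1. Suppose F(x) ∈ ℂ[[x]] is a formal power series satisfying (1 + Qx) Q^ℓ F(Qx) = (1 + Q^{k+1} x) F(x) (as formal power series, where F(Qx) denotes substitution of Qx for x). Then F = 0. -/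
open PowerSeries

/-- Uniqueness lemma: if `F ∈ ℂ[[x]]` satisfies
`(1 + Qx) Q^ℓ F(Qx) = (1 + Q^{k+1} x) F(x)` with `Q > 1` real and `ℓ ≥ 1`, then `F = 0`. -/
theorem stmt6 (Q : ℝ) (hQ : 1 < Q) (k ℓ : ℕ) (hℓ : 1 ≤ ℓ) (F : PowerSeries ℂ)
    (h : (1 + PowerSeries.C (Q : ℂ) * PowerSeries.X) * PowerSeries.C ((Q : ℂ) ^ ℓ) *
          PowerSeries.rescale (Q : ℂ) F =
        (1 + PowerSeries.C ((Q : ℂ) ^ (k + 1)) * PowerSeries.X) * F) :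
    F = 0 := by
  have hQne : ∀ m : ℕ, 1 ≤ m → ((Q:ℂ) ^ m) ≠ 1 := by
    intro m hm h1
    have : (Q:ℝ) ^ m = 1 := by exact_mod_cast h1
    nlinarith [one_lt_pow₀ hQ (by omega : m ≠ 0)]
  have cancel : ∀ m : ℕ, 1 ≤ m → ∀ z : ℂ, (Q:ℂ) ^ m * z = z → z = 0 := by
    intro m hm z hz
    have h2 : ((Q:ℂ) ^ m - 1) * z = 0 := by linear_combination hz
    rcases mul_eq_zero.mp h2 with h3 | h3
    · exact absurd (by linear_combination h3) (hQne m hm)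
    · exact h3
  have key : ∀ n, PowerSeries.coeff n F = 0 := by
    intro n
    induction n with
    | zero =>
      have h0 := congrArg (PowerSeries.coeff 0) h
      simp [coeff_rescale, mul_assoc, add_mul, mul_add, PowerSeries.coeff_C_mul, ← map_pow] at h0
      have hr : (PowerSeries.constantCoeff) ((rescale (Q:ℂ)) F) =
          PowerSeries.constantCoeff F := by
        rw [← coeff_zero_eq_constantCoeff_apply, coeff_rescale]; simp
      rw [hr] at h0
      rw [coeff_zero_eq_constantCoeff]
      exact cancel ℓ hℓ _ h0
    | succ n ih =>
      have h0 := congrArg (PowerSeries.coeff (n+1)) h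
      simp [coeff_rescale, coeff_succ_X_mul, PowerSeries.coeff_C_mul, mul_add, add_mul,
        mul_assoc, ih, ← map_pow] at h0
      exact cancel (ℓ + (n + 1)) (by omega) _ (by rw [pow_add]; linear_combination h0)
  ext n
  simp [key n]
end

section
/- Let q > 1 be real and a ∈ ℂ with α, β the two roots of X² - aX + q. Then |α| = |β| = √q if and only if a is real and |a| ≤ 2√q. -/
private lemma aux9 (q : ℝ) (hq : 1 < q) (a α β : ℂ)
    (hprod : α * β = (q : ℂ)) (hsum : α + β = a)
    (him : a.im = 0) (hle : ‖a‖ ≤ 2 * Real.sqrt q) :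
    ‖α‖ = Real.sqrt q := by
  have hq0 : (0:ℝ) ≤ q := by linarith
  -- α² - aα + q = 0
  have hroot : α * a - α * α = (q : ℂ) := by
    have : α * (a - α) = (q : ℂ) := by rw [← hsum]; ring_nf; rw [mul_comm]; linear_combination hprod
    linear_combination this
  set x := α.re
  set y := α.im
  set A := a.re
  have hre : A * x - (x^2 - y^2) = q := by
    have := congrArg Complex.re hroot
    simp [Complex.mul_re, him] at this
    push_cast at this
    ring_nf at this ⊢
    linarith
  have him2 : A * y - 2 * x * y = 0 := by
    have := congrArg Complex.im hroot
    simp [Complex.mul_im, him] at this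
    ring_nf at this ⊢
    linarith
  have hA2 : A^2 ≤ 4 * q := by
    have habs : ‖a‖ = |A| := by
      have : a = (A : ℂ) := Complex.ext rfl him
      rw [this, Complex.norm_real, Real.norm_eq_abs]
    have h1 : |A| ≤ 2 * Real.sqrt q := habs ▸ hle
    have h2 : (2 * Real.sqrt q)^2 = 4 * q := by
      rw [mul_pow, Real.sq_sqrt hq0]; ring
    nlinarith [sq_abs A, sq_nonneg (|A| - 2 * Real.sqrt q), Real.sqrt_nonneg q, abs_nonneg A]
  have hxy : x^2 + y^2 = q := by
    rcases mul_eq_zero.mp (show y * (A - 2*x) = 0 by linarith [him2]) with hy | hx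
    · -- y = 0
      rw [hy] at hre ⊢
      nlinarith [sq_nonneg (2*x - A)]
    · linear_combination hre - x * hx
  have : (‖α‖)^2 = q := by
    rw [Complex.sq_norm, Complex.normSq_apply]; ring_nf; ring_nf at hxy; linarith
  rw [← this, Real.sqrt_sq (norm_nonneg α)]

/-- For `q > 1` real and `α, β` the two roots of `X² - aX + q` (i.e. `αβ = q`,
`α + β = a`), both roots have absolute value `√q` iff `a` is real with `|a| ≤ 2√q`. -/
theorem stmt9 (q : ℝ) (hq : 1 < q) (a α β : ℂ)
    (hprod : α * β = (q : ℂ)) (hsum : α + β = a) :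
    (‖α‖ = Real.sqrt q ∧ ‖β‖ = Real.sqrt q) ↔
      (a.im = 0 ∧ ‖a‖ ≤ 2 * Real.sqrt q) := by
  have hq0 : (0:ℝ) ≤ q := by linarith
  constructor
  · rintro ⟨hα, hβ⟩
    have hα0 : α ≠ 0 := by
      intro h
      rw [h, norm_zero] at hα
      have := Real.sqrt_pos.mpr (by linarith : (0:ℝ) < q)
      linarith [hα ▸ this]
    have hnorm : Complex.normSq α = q := by
      have : Complex.normSq α = (‖α‖)^2 := (Complex.sq_norm α).symm
      rw [this, hα, Real.sq_sqrt hq0]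
    have hβc : β = (starRingEnd ℂ) α := by
      have h1 : α * ((starRingEnd ℂ) α) = (q : ℂ) := by
        rw [Complex.mul_conj, hnorm]
      exact mul_left_cancel₀ hα0 (hprod.trans h1.symm)
    have ha : a = α + (starRingEnd ℂ) α := by rw [← hsum, hβc]
    constructor
    · rw [ha]; simp
    · have h2 : ‖a‖ = |2 * α.re| := by
        rw [ha, Complex.add_conj, Complex.norm_real, Real.norm_eq_abs]
      rw [h2, hα.symm] at *
      calc |2 * α.re| = 2 * |α.re| := by rw [abs_mul]; norm_num
        _ ≤ 2 * ‖α‖ := by linarith [Complex.abs_re_le_norm α]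
  · rintro ⟨him, hle⟩
    refine ⟨aux9 q hq a α β hprod hsum him hle, aux9 q hq a β α ?_ ?_ him hle⟩
    · rw [mul_comm]; exact hprod
    · rw [add_comm]; exact hsum
end

section
/- Let Q > 1 be real and k ≥ 0 an integer. Define v_ℓ for 1 ≤ ℓ ≤ k by v_ℓ = (-1)^{ℓ+1} Q^{binom(ℓ,2) - kℓ} · (Q;Q)_{ℓ+k} / ((Q;Q)_ℓ (Q;Q)_{ℓ-1} (Q;Q)_{k-ℓ}) and v_ℓ = 0 for ℓ > k, where (Q;Q)_n = ∏_{j=1}^n (1 - Q^j). Define rational functions B_ℓ(x) = 0 for ℓ > k and, for 1 ≤ ℓ ≤ k, B_ℓ(x) = (-1)^{ℓ-1} · ((Q;Q)_{ℓ+k}/((Q;Q)_k (Q;Q)_{ℓ-1})) · x^ℓ Y_ℓ(x)/D(x), where D(x) = ∏_{j=1}^k (Q^j - x) and Y_ℓ(x) = ∑_{r=0}^{k-ℓ} Q^{binom(r+1,2)+binom(k-ℓ-r+1,2)} [k choose r]_Q [k choose k-ℓ-r]_Q x^r. Then ∑_{ℓ=1}^{∞} B_ℓ(x) = -1 + ∏_{j=1}^k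 (1 - Q^j x)/(1 - Q^{-j} x) as rational functions in x. -/
open Finset

/-- The `Q`-Pochhammer value `(Q;Q)_n = ∏_{j=1}^{n} (1 - Q^j)`. -/
noncomputable def qP (Q : ℝ) (n : ℕ) : ℝ := ∏ j ∈ Finset.Icc 1 n, (1 - Q ^ j)

/-- The `Q`-binomial coefficient `[a choose b]_Q`, `0` when `b > a`. -/
noncomputable def qB (Q : ℝ) (a b : ℕ) : ℝ :=
  if b ≤ a then qP Q a / (qP Q b * qP Q (a - b)) else 0

/-- `Y_k^ℓ(x) = ∑_{r=0}^{k-ℓ} Q^{C(r+1,2)+C(k-ℓ-r+1,2)} [k choose r]_Q [k choose k-ℓ-r]_Q x^r`. -/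
noncomputable def Ypoly (Q : ℝ) (k ℓ : ℕ) (x : ℝ) : ℝ :=
  ∑ r ∈ range (k - ℓ + 1),
    Q ^ (r * (r + 1) / 2 + (k - ℓ - r) * (k - ℓ - r + 1) / 2) * qB Q k r * qB Q k (k - ℓ - r) * x ^ r

/-- `D_k(x) = ∏_{j=1}^k (Q^j - x)`. -/
noncomputable def Dpoly (Q : ℝ) (k : ℕ) (x : ℝ) : ℝ := ∏ j ∈ Finset.Icc 1 k, (Q ^ j - x)

/-- `B_ℓ(x)`, the explicit rational function, `0` for `ℓ > k`. -/
noncomputable def Bfun (Q : ℝ) (k ℓ : ℕ) (x : ℝ) : ℝ :=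
  if ℓ ≤ k then
    (-1) ^ (ℓ - 1) * (qP Q (ℓ + k) / (qP Q k * qP Q (ℓ - 1))) * x ^ ℓ * Ypoly Q k ℓ x / Dpoly Q k x
  else 0

section
variable {Q : ℝ}


lemma qP_zero (Q : ℝ) : qP Q 0 = 1 := by simp [qP]

lemma qP_succ (Q : ℝ) (n : ℕ) : qP Q (n+1) = qP Q n * (1 - Q^(n+1)) := by
  rw [qP, qP, Finset.prod_Icc_succ_top (by omega)]

lemma osp (hQ : 1 < Q) {j : ℕ} (h : 1 ≤ j) : (1:ℝ) - Q^j ≠ 0 := by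
  have : 1 < Q^j := one_lt_pow₀ hQ (by omega)
  intro hc; linarith

lemma qP_ne (hQ : 1 < Q) (n : ℕ) : qP Q n ≠ 0 := by
  rw [qP]
  exact Finset.prod_ne_zero_iff.mpr fun j hj => osp hQ (Finset.mem_Icc.mp hj).1

lemma qB_of_lt (Q : ℝ) {a b : ℕ} (h : a < b) : qB Q a b = 0 := by
  rw [qB, if_neg (by omega)]

lemma qB_eq (Q : ℝ) {a b : ℕ} (h : b ≤ a) : qB Q a b = qP Q a / (qP Q b * qP Q (a-b)) := by
  rw [qB, if_pos h]

lemma qB_zero (hQ : 1 < Q) (n : ℕ) : qB Q n 0 = 1 := by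
  rw [qB_eq Q (Nat.zero_le n), qP_zero, Nat.sub_zero, one_mul, div_self (qP_ne hQ n)]

lemma qB_self (hQ : 1 < Q) (n : ℕ) : qB Q n n = 1 := by
  rw [qB_eq Q le_rfl, Nat.sub_self, qP_zero, mul_one, div_self (qP_ne hQ n)]

lemma qB_symm (hQ : 1 < Q) {k m : ℕ} (h : m ≤ k) : qB Q k (k-m) = qB Q k m := by
  rw [qB_eq Q (Nat.sub_le k m), qB_eq Q h, Nat.sub_sub_self h, mul_comm]

lemma pascal1 (hQ : 1 < Q) (a b : ℕ) :
    qB Q (a+b+1) (b+1) = Q^a * qB Q (a+b) b + qB Q (a+b) (b+1) := by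
  rcases a with _ | a
  · simp [qB_self hQ, qB_of_lt Q (Nat.lt_succ_self b)]
  · rw [qB_eq Q (by omega), qB_eq Q (by omega), qB_eq Q (by omega)]
    rw [show a+1+b+1 - (b+1) = a+1 by omega, show a+1+b - b = a+1 by omega,
        show a+1+b - (b+1) = a by omega, show a+1+b+1 = (a+b+1)+1 by omega,
        show a+1+b = (a+b)+1 by omega]
    rw [qP_succ Q (a+b+1), qP_succ Q (a+b), qP_succ Q a, qP_succ Q b]
    have n1 := qP_ne hQ (a+b)
    have n2 := qP_ne hQ a
    have n3 := qP_ne hQ b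
    have o1 := osp hQ (show 1 ≤ a+b+1+1 by omega)
    have o2 := osp hQ (show 1 ≤ a+b+1 by omega)
    have o3 := osp hQ (show 1 ≤ a+1 by omega)
    have o4 := osp hQ (show 1 ≤ b+1 by omega)
    field_simp
    ring

lemma pascal2 (hQ : 1 < Q) (k t : ℕ) :
    qB Q (k+1) (t+1) = qB Q k t + Q^(t+1) * qB Q k (t+1) := by
  rcases lt_trichotomy t k with h | h | h
  · obtain ⟨s, rfl⟩ : ∃ s, k = t+s+1 := ⟨k-t-1, by omega⟩
    rw [qB_eq Q (by omega), qB_eq Q (by omega), qB_eq Q (by omega)]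
    rw [show t+s+1+1 - (t+1) = s+1 by omega, show t+s+1 - t = s+1 by omega,
        show t+s+1 - (t+1) = s by omega, show t+s+1+1 = (t+s+1)+1 by omega]
    rw [qP_succ Q (t+s+1), qP_succ Q t, qP_succ Q s]
    have n1 := qP_ne hQ (t+s+1)
    have n2 := qP_ne hQ t
    have n3 := qP_ne hQ s
    have o1 := osp hQ (show 1 ≤ t+s+1+1 by omega)
    have o2 := osp hQ (show 1 ≤ t+1 by omega)
    have o3 := osp hQ (show 1 ≤ s+1 by omega)
    field_simp
    ring
  · subst h
    simp [qB_self hQ, qB_of_lt Q (Nat.lt_succ_self t)]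
  · rw [qB_of_lt Q (by omega), qB_of_lt Q (by omega), qB_of_lt Q (by omega)]
    ring

lemma mulid (hQ : 1 < Q) (a b : ℕ) :
    (1 - Q^(a+1)) * qB Q (a+b+1) b = (1 - Q^(a+b+1)) * qB Q (a+b) b := by
  rw [qB_eq Q (by omega), qB_eq Q (by omega),
      show a+b+1 - b = a+1 by omega, show a+b - b = a by omega]
  rw [qP_succ Q (a+b), qP_succ Q a]
  have n1 := qP_ne hQ (a+b)
  have n2 := qP_ne hQ a
  have n3 := qP_ne hQ b
  have o2 := osp hQ (show 1 ≤ a+b+1 by omega)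
  have o3 := osp hQ (show 1 ≤ a+1 by omega)
  field_simp

lemma cdef (hQ : 1 < Q) (k ℓ : ℕ) (hl : 1 ≤ ℓ) :
    qP Q (ℓ+k) / (qP Q k * qP Q (ℓ-1)) = (1 - Q^ℓ) * qB Q (k+ℓ) k := by
  obtain ⟨t, rfl⟩ : ∃ t, ℓ = t+1 := ⟨ℓ-1, by omega⟩
  rw [qB_eq Q (by omega), show k+(t+1) - k = t+1 by omega, show t+1-1 = t by omega,
      show t+1+k = k+(t+1) by omega, show k+(t+1) = (k+t)+1 by omega]
  rw [qP_succ Q (k+t), qP_succ Q t]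
  have n1 := qP_ne hQ (k+t)
  have n2 := qP_ne hQ t
  have n3 := qP_ne hQ k
  have o2 := osp hQ (show 1 ≤ k+t+1 by omega)
  have o3 := osp hQ (show 1 ≤ t+1 by omega)
  field_simp


lemma Tsucc (s : ℕ) : (s+1)*((s+1)+1)/2 = s*(s+1)/2 + (s+1) := by
  have h : (s+1)*((s+1)+1) = s*(s+1) + (s+1)*2 := by ring
  rw [h, Nat.add_mul_div_right _ _ (by norm_num : 0 < 2)]

lemma Teven (n : ℕ) : 2 * (n*(n+1)/2) = n*(n+1) :=
  Nat.mul_div_cancel' (Nat.even_mul_succ_self n).two_dvd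

lemma expid {m k : ℕ} (h : m ≤ k) :
    m*(k+1) + (k-m)*((k-m)+1)/2 = k*(k+1)/2 + m*(m+1)/2 := by
  obtain ⟨d, rfl⟩ : ∃ d, k = m + d := ⟨k-m, by omega⟩
  rw [show m+d-m = d by omega]
  have e1 : (m+d)*((m+d)+1) = m*(m+1) + d*(d+1) + 2*(m*d) := by ring
  have e2 : m*((m+d)+1) = m*(m+1) + m*d := by ring
  have t1 := Teven d
  have t2 := Teven (m+d)
  have t3 := Teven m
  omega

lemma negpow_sub {m j : ℕ} (h : j ≤ m) : (-1:ℝ)^(m-j) = (-1)^m * (-1)^j := by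
  have h1 : (-1:ℝ)^(m-j) * (-1)^j = (-1)^m := by
    rw [← pow_add, show m-j+j = m by omega]
  have h2 : ((-1:ℝ)^j) * ((-1)^j) = 1 := by
    rw [← pow_add]; exact Even.neg_one_pow ⟨j, rfl⟩
  calc (-1:ℝ)^(m-j) = (-1)^(m-j) * ((-1)^j * (-1)^j) := by rw [h2, mul_one]
    _ = ((-1)^(m-j) * (-1)^j) * (-1)^j := by ring
    _ = (-1)^m * (-1)^j := by rw [h1]

lemma gauss (k : ℕ) : ∑ j ∈ Icc 1 k, j = k*(k+1)/2 := by
  induction k with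
  | zero => simp
  | succ k ih =>
    rw [Finset.sum_Icc_succ_top (by omega), ih]
    have := Tsucc k
    omega

lemma Hlem (hQ : 1 < Q) (k : ℕ) : ∀ m, ∑ t ∈ range (m+1),
    (-1:ℝ)^t * Q^(t*(t+1)/2) * qB Q k t * qB Q (k+m-t) k = 1 := by
  induction k with
  | zero =>
    intro m
    rw [Finset.sum_eq_single 0]
    · norm_num [qB_zero hQ]
    · intro t _ hne
      rw [qB_of_lt Q (show 0 < t by omega)]
      ring
    · intro h; exact absurd (Finset.mem_range.mpr (by omega)) h
  | succ k ihk =>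
    intro m
    induction m with
    | zero => norm_num [qB_zero hQ, qB_self hQ]
    | succ m ihm =>
      have key : ∀ t ∈ range (m+2),
          (-1:ℝ)^t * Q^(t*(t+1)/2) * qB Q (k+1) t * qB Q (k+1+(m+1)-t) (k+1)
          = ((-1:ℝ)^t * Q^(t*(t+1)/2 + (m+1-t)) * qB Q (k+1) t * qB Q (k+m+1-t) k)
            + ((-1:ℝ)^t * Q^(t*(t+1)/2) * qB Q (k+1) t * qB Q (k+m+1-t) (k+1)) := by
        intro t ht
        have htm : t ≤ m+1 := by have := mem_range.mp ht; omega
        rw [show k+1+(m+1)-t = (m+1-t)+k+1 by omega, pascal1 hQ (m+1-t) k,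
            show (m+1-t)+k = k+m+1-t by omega, pow_add]
        ring
      rw [sum_congr rfl key, sum_add_distrib]
      have hS2 : ∑ t ∈ range (m+2),
          (-1:ℝ)^t * Q^(t*(t+1)/2) * qB Q (k+1) t * qB Q (k+m+1-t) (k+1) = 1 := by
        rw [sum_range_succ, show k+m+1-(m+1) = k by omega, qB_of_lt Q (Nat.lt_succ_self k)]
        have c : ∀ t ∈ range (m+1),
            (-1:ℝ)^t * Q^(t*(t+1)/2) * qB Q (k+1) t * qB Q (k+m+1-t) (k+1)
            = (-1:ℝ)^t * Q^(t*(t+1)/2) * qB Q (k+1) t * qB Q (k+1+m-t) (k+1) := by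
          intro t ht
          rw [show k+m+1-t = k+1+m-t by omega]
        rw [sum_congr rfl c, ihm]
        ring
      have hg2 : ∑ s ∈ range (m+1),
          (-1:ℝ)^s * Q^(s*(s+1)/2 + (s+1)) * qB Q k (s+1) * qB Q (k+m-s) k
          = qB Q (k+m+1) k - 1 := by
        have h := ihk (m+1)
        rw [Finset.sum_range_succ'] at h
        have c2 : ∀ s ∈ range (m+1),
            (-1:ℝ)^(s+1) * Q^((s+1)*((s+1)+1)/2) * qB Q k (s+1) * qB Q (k+(m+1)-(s+1)) k
            = -((-1:ℝ)^s * Q^(s*(s+1)/2 + (s+1)) * qB Q k (s+1) * qB Q (k+m-s) k) := by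
          intro s hs
          rw [show k+(m+1)-(s+1) = k+m-s by omega, Tsucc s, pow_add]
          ring
        rw [sum_congr rfl c2] at h
        simp only [Finset.sum_neg_distrib] at h
        norm_num [qB_zero hQ] at h
        rw [show k+(m+1) = k+m+1 by omega] at h
        linarith
      have hS1 : ∑ t ∈ range (m+2),
          (-1:ℝ)^t * Q^(t*(t+1)/2 + (m+1-t)) * qB Q (k+1) t * qB Q (k+m+1-t) k = 0 := by
        have hps : ∑ t ∈ range (m+2),
            (-1:ℝ)^t * Q^(t*(t+1)/2 + (m+1-t)) * qB Q (k+1) t * qB Q (k+m+1-t) k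
            = (∑ s ∈ range (m+1),
                (-1:ℝ)^(s+1) * Q^((s+1)*((s+1)+1)/2 + (m+1-(s+1))) * qB Q (k+1) (s+1) * qB Q (k+m+1-(s+1)) k)
              + (-1:ℝ)^0 * Q^(0*(0+1)/2 + (m+1-0)) * qB Q (k+1) 0 * qB Q (k+m+1-0) k :=
          Finset.sum_range_succ' _ _
        rw [hps]
        have c3 : ∀ s ∈ range (m+1),
            (-1:ℝ)^(s+1) * Q^((s+1)*((s+1)+1)/2 + (m+1-(s+1))) * qB Q (k+1) (s+1) * qB Q (k+m+1-(s+1)) k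
            = -(Q^(m+1)) * ((-1:ℝ)^s * Q^(s*(s+1)/2) * qB Q k s * qB Q (k+m-s) k)
              + -(Q^(m+1)) * ((-1:ℝ)^s * Q^(s*(s+1)/2 + (s+1)) * qB Q k (s+1) * qB Q (k+m-s) k) := by
          intro s hs
          have hsm : s ≤ m := by have := mem_range.mp hs; omega
          have hT := Tsucc s
          rw [show k+m+1-(s+1) = k+m-s by omega,
              show (s+1)*((s+1)+1)/2 + (m+1-(s+1)) = (s*(s+1)/2) + (m+1) by omega,
              pascal2 hQ k s, pow_add, pow_add, pow_add]
          ring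
        rw [sum_congr rfl c3, sum_add_distrib, ← Finset.mul_sum, ← Finset.mul_sum, ihk m, hg2]
        norm_num [qB_zero hQ]
        ring
      rw [hS1, hS2]
      ring

lemma Glem (hQ : 1 < Q) (k : ℕ) : ∀ m, ∑ t ∈ range m,
    (-1:ℝ)^t * Q^(t*(t+1)/2) * qB Q k t * ((1 - Q^(m-t)) * qB Q (k+m-t) k)
    = 1 - Q^(m*(k+1)) := by
  intro m
  induction m with
  | zero => simp
  | succ m ihm =>
    have c1 : ∀ t ∈ range (m+1),
        (-1:ℝ)^t * Q^(t*(t+1)/2) * qB Q k t * ((1 - Q^(m+1-t)) * qB Q (k+(m+1)-t) k)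
        = Q^(k+1) * ((-1:ℝ)^t * Q^(t*(t+1)/2) * qB Q k t * ((1 - Q^(m-t)) * qB Q (k+m-t) k))
          + (1 - Q^(k+1)) * ((-1:ℝ)^t * Q^(t*(t+1)/2) * qB Q k t * qB Q (k+m-t) k) := by
      intro t ht
      have htm : t ≤ m := by have := mem_range.mp ht; omega
      rw [show k+(m+1)-t = (m-t)+k+1 by omega, show m+1-t = (m-t)+1 by omega,
          mulid hQ (m-t) k, show (m-t)+k+1 = (m-t)+(k+1) by omega, pow_add,
          show (m-t)+k = k+m-t by omega]
      ring
    rw [sum_congr rfl c1, sum_add_distrib, ← Finset.mul_sum, ← Finset.mul_sum,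
        Finset.sum_range_succ]
    rw [show m - m = 0 by omega]
    norm_num
    rw [ihm, Hlem hQ k m, show (m+1)*(k+1) = m*(k+1) + (k+1) by ring, pow_add]
    ring

lemma prodA (hQ : 1 < Q) (x : ℝ) (n : ℕ) :
    ∏ j ∈ Icc 1 n, (1 - Q^j * x) = ∑ t ∈ range (n+1), Q^(t*(t+1)/2) * qB Q n t * (-x)^t := by
  induction n with
  | zero => norm_num [qB_zero hQ]
  | succ n ih =>
    rw [Finset.prod_Icc_succ_top (by omega : 1 ≤ n+1), ih]
    have hps : ∑ t ∈ range (n+2), Q^(t*(t+1)/2) * qB Q (n+1) t * (-x)^t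
        = (∑ s ∈ range (n+1), Q^((s+1)*((s+1)+1)/2) * qB Q (n+1) (s+1) * (-x)^(s+1))
          + Q^(0*(0+1)/2) * qB Q (n+1) 0 * (-x)^0 := Finset.sum_range_succ' _ _
    have c : ∀ s ∈ range (n+1),
        Q^((s+1)*((s+1)+1)/2) * qB Q (n+1) (s+1) * (-x)^(s+1)
        = (-x) * Q^(n+1) * (Q^(s*(s+1)/2) * qB Q n s * (-x)^s)
          + Q^((s+1)*((s+1)+1)/2) * qB Q n (s+1) * (-x)^(s+1) := by
      intro s hs
      have hsn : s ≤ n := by have := mem_range.mp hs; omega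
      rw [show n+1 = (n-s)+s+1 by omega, pascal1 hQ (n-s) s,
          show (n-s)+s = n by omega, Tsucc s, pow_add, pow_add]
      have hQn : Q^(n-s) * Q^(s+1) = Q^(n+1) := by rw [← pow_add]; congr 1; omega
      linear_combination (Q^(s*(s+1)/2) * qB Q n s * (-x)^(s+1)) * hQn
    have hshift : ∑ s ∈ range (n+1), Q^((s+1)*((s+1)+1)/2) * qB Q n (s+1) * (-x)^(s+1)
        = ∑ t ∈ range (n+1), Q^(t*(t+1)/2) * qB Q n t * (-x)^t - 1 := by
      have h2 : ∑ t ∈ range (n+2), Q^(t*(t+1)/2) * qB Q n t * (-x)^t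
          = (∑ s ∈ range (n+1), Q^((s+1)*((s+1)+1)/2) * qB Q n (s+1) * (-x)^(s+1))
            + Q^(0*(0+1)/2) * qB Q n 0 * (-x)^0 := Finset.sum_range_succ' _ _
      rw [Finset.sum_range_succ, qB_of_lt Q (Nat.lt_succ_self n)] at h2
      norm_num [qB_zero hQ] at h2
      linarith
    rw [hps, sum_congr rfl c, sum_add_distrib, ← Finset.mul_sum, hshift]
    norm_num [qB_zero hQ]
    ring

lemma prodD (hQ : 1 < Q) (x : ℝ) (n : ℕ) :
    ∏ j ∈ Icc 1 n, (Q^j - x) = ∑ t ∈ range (n+1), Q^(t*(t+1)/2) * qB Q n t * (-x)^(n-t) := by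
  induction n with
  | zero => norm_num [qB_zero hQ]
  | succ n ih =>
    rw [Finset.prod_Icc_succ_top (by omega : 1 ≤ n+1), ih]
    have hps : ∑ t ∈ range (n+2), Q^(t*(t+1)/2) * qB Q (n+1) t * (-x)^(n+1-t)
        = (∑ s ∈ range (n+1), Q^((s+1)*((s+1)+1)/2) * qB Q (n+1) (s+1) * (-x)^(n+1-(s+1)))
          + Q^(0*(0+1)/2) * qB Q (n+1) 0 * (-x)^(n+1-0) := Finset.sum_range_succ' _ _
    have c : ∀ s ∈ range (n+1),
        Q^((s+1)*((s+1)+1)/2) * qB Q (n+1) (s+1) * (-x)^(n+1-(s+1))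
        = Q^(n+1) * (Q^(s*(s+1)/2) * qB Q n s * (-x)^(n-s))
          + Q^((s+1)*((s+1)+1)/2) * qB Q n (s+1) * (-x)^(n+1-(s+1)) := by
      intro s hs
      have hsn : s ≤ n := by have := mem_range.mp hs; omega
      rw [show n+1 = (n-s)+s+1 by omega, pascal1 hQ (n-s) s,
          show (n-s)+s = n by omega, Tsucc s, pow_add, pow_add,
          show n+1-(s+1) = n-s by omega]
      have hQn : Q^(n-s) * Q^(s+1) = Q^(n+1) := by rw [← pow_add]; congr 1; omega
      linear_combination (Q^(s*(s+1)/2) * qB Q n s * (-x)^(n-s)) * hQn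
    have hshift : ∑ s ∈ range (n+1), Q^((s+1)*((s+1)+1)/2) * qB Q n (s+1) * (-x)^(n+1-(s+1))
        = (-x) * (∑ t ∈ range (n+1), Q^(t*(t+1)/2) * qB Q n t * (-x)^(n-t)) - (-x)^(n+1) := by
      have h2 : ∑ t ∈ range (n+2), Q^(t*(t+1)/2) * qB Q n t * (-x)^(n+1-t)
          = (∑ s ∈ range (n+1), Q^((s+1)*((s+1)+1)/2) * qB Q n (s+1) * (-x)^(n+1-(s+1)))
            + Q^(0*(0+1)/2) * qB Q n 0 * (-x)^(n+1-0) := Finset.sum_range_succ' _ _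
      rw [Finset.sum_range_succ, qB_of_lt Q (Nat.lt_succ_self n)] at h2
      have c2 : ∀ t ∈ range (n+1), Q^(t*(t+1)/2) * qB Q n t * (-x)^(n+1-t)
          = (-x) * (Q^(t*(t+1)/2) * qB Q n t * (-x)^(n-t)) := by
        intro t ht
        have htn : t ≤ n := by have := mem_range.mp ht; omega
        rw [show n+1-t = (n-t)+1 by omega, pow_succ]
        ring
      rw [sum_congr rfl c2, ← Finset.mul_sum] at h2
      norm_num [qB_zero hQ] at h2
      linarith
    rw [hps, sum_congr rfl c, sum_add_distrib, ← Finset.mul_sum, hshift]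
    norm_num [qB_zero hQ]
    ring

lemma Phi (hQ : 1 < Q) (k : ℕ) (m : ℕ) :
    ∑ ℓ ∈ Icc 1 m, (-1:ℝ)^(ℓ-1) * (qP Q (ℓ+k) / (qP Q k * qP Q (ℓ-1)))
        * Q^((m-ℓ)*((m-ℓ)+1)/2) * qB Q k (m-ℓ)
      = (-1:ℝ)^(m-1) * (1 - Q^(m*(k+1))) := by
  have h1 : ∑ ℓ ∈ Icc 1 m, (-1:ℝ)^(ℓ-1) * (qP Q (ℓ+k) / (qP Q k * qP Q (ℓ-1)))
        * Q^((m-ℓ)*((m-ℓ)+1)/2) * qB Q k (m-ℓ)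
      = ∑ i ∈ range m, (-1:ℝ)^((1+i)-1) * (qP Q ((1+i)+k) / (qP Q k * qP Q ((1+i)-1)))
        * Q^((m-(1+i))*((m-(1+i))+1)/2) * qB Q k (m-(1+i)) := by
    rw [← Finset.Ico_add_one_right_eq_Icc, Finset.sum_Ico_eq_sum_range, show m+1-1 = m by omega]
  have h2 : ∑ i ∈ range m, (-1:ℝ)^((1+i)-1) * (qP Q ((1+i)+k) / (qP Q k * qP Q ((1+i)-1)))
        * Q^((m-(1+i))*((m-(1+i))+1)/2) * qB Q k (m-(1+i))
      = ∑ j ∈ range m, (-1:ℝ)^((1+(m-1-j))-1)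
        * (qP Q ((1+(m-1-j))+k) / (qP Q k * qP Q ((1+(m-1-j))-1)))
        * Q^((m-(1+(m-1-j)))*((m-(1+(m-1-j)))+1)/2) * qB Q k (m-(1+(m-1-j))) :=
    (Finset.sum_range_reflect _ _).symm
  rw [h1, h2]
  have h3 : ∀ j ∈ range m,
      (-1:ℝ)^((1+(m-1-j))-1) * (qP Q ((1+(m-1-j))+k) / (qP Q k * qP Q ((1+(m-1-j))-1)))
        * Q^((m-(1+(m-1-j)))*((m-(1+(m-1-j)))+1)/2) * qB Q k (m-(1+(m-1-j)))
      = (-1:ℝ)^(m-1) * ((-1:ℝ)^j * Q^(j*(j+1)/2) * qB Q k j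
          * ((1 - Q^(m-j)) * qB Q (k+m-j) k)) := by
    intro j hj
    have hjm : j < m := mem_range.mp hj
    rw [show 1+(m-1-j) = m-j by omega, show m-(m-j) = j by omega,
        cdef hQ k (m-j) (by omega), show k+(m-j) = k+m-j by omega,
        show m-j-1 = m-1-j by omega, negpow_sub (show j ≤ m-1 by omega)]
    ring
  rw [sum_congr rfl h3, ← Finset.mul_sum, Glem hQ k m]

lemma keylem (hQ : 1 < Q) (k : ℕ) (x : ℝ) :
    ∑ ℓ ∈ Icc 1 k, ((-1:ℝ)^(ℓ-1) * (qP Q (ℓ+k) / (qP Q k * qP Q (ℓ-1))) * x^ℓ * Ypoly Q k ℓ x)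
    = Q^(k*(k+1)/2) * (∏ j ∈ Icc 1 k, (1 - Q^j * x)) - Dpoly Q k x := by
  -- step 1: unfold Ypoly and make double sum
  have step1 : ∑ ℓ ∈ Icc 1 k, ((-1:ℝ)^(ℓ-1) * (qP Q (ℓ+k) / (qP Q k * qP Q (ℓ-1))) * x^ℓ * Ypoly Q k ℓ x)
      = ∑ ℓ ∈ Icc 1 k, ∑ r ∈ range (k-ℓ+1),
          (-1:ℝ)^(ℓ-1) * (qP Q (ℓ+k) / (qP Q k * qP Q (ℓ-1)))
            * (Q^(r*(r+1)/2 + (k-ℓ-r)*((k-ℓ-r)+1)/2) * qB Q k r * qB Q k (k-ℓ-r)) * x^(ℓ+r) := by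
    refine sum_congr rfl fun ℓ hℓ => ?_
    rw [Ypoly, Finset.mul_sum]
    refine sum_congr rfl fun r hr => ?_
    rw [pow_add]
    ring
  -- step 2: reindex
  have step2 : ∑ ℓ ∈ Icc 1 k, ∑ r ∈ range (k-ℓ+1),
          (-1:ℝ)^(ℓ-1) * (qP Q (ℓ+k) / (qP Q k * qP Q (ℓ-1)))
            * (Q^(r*(r+1)/2 + (k-ℓ-r)*((k-ℓ-r)+1)/2) * qB Q k r * qB Q k (k-ℓ-r)) * x^(ℓ+r)
      = ∑ m ∈ range (k+1), ∑ ℓ ∈ Icc 1 m,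
          (-1:ℝ)^(ℓ-1) * (qP Q (ℓ+k) / (qP Q k * qP Q (ℓ-1)))
            * (Q^((m-ℓ)*((m-ℓ)+1)/2 + (k-ℓ-(m-ℓ))*((k-ℓ-(m-ℓ))+1)/2) * qB Q k (m-ℓ) * qB Q k (k-ℓ-(m-ℓ))) * x^(ℓ+(m-ℓ)) := by
    rw [Finset.sum_sigma', Finset.sum_sigma']
    refine Finset.sum_nbij' (fun p => (⟨p.1 + p.2, p.1⟩ : Σ _ : ℕ, ℕ))
      (fun p => (⟨p.2, p.1 - p.2⟩ : Σ _ : ℕ, ℕ)) ?_ ?_ ?_ ?_ ?_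
    · intro p hp
      simp only [Finset.mem_sigma, mem_Icc, mem_range] at *
      omega
    · intro p hp
      simp only [Finset.mem_sigma, mem_Icc, mem_range] at *
      omega
    · intro p hp
      simp only [Finset.mem_sigma, mem_Icc, mem_range] at hp
      simp only [Nat.add_sub_cancel_left]
    · intro p hp
      simp only [Finset.mem_sigma, mem_Icc, mem_range] at hp
      have : p.2 + (p.1 - p.2) = p.1 := by omega
      exact Sigma.ext this (by simp)
    · intro p hp
      simp only [Finset.mem_sigma, mem_Icc, mem_range] at hp
      simp only [Nat.add_sub_cancel_left]
  rw [step1, step2]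
  -- step 3: RHS as a sum
  have hD : Dpoly Q k x = ∑ m ∈ range (k+1),
      Q^((k-m)*((k-m)+1)/2) * qB Q k (k-m) * (-x)^m := by
    rw [Dpoly, prodD hQ x k]
    have := (Finset.sum_range_reflect
      (fun t => Q^(t*(t+1)/2) * qB Q k t * (-x)^(k-t)) (k+1)).symm
    rw [this]
    refine sum_congr rfl fun m hm => ?_
    have hmk : m ≤ k := by have := mem_range.mp hm; omega
    rw [show k+1-1-m = k-m by omega, show k-(k-m) = m by omega]
  have hA : Q^(k*(k+1)/2) * (∏ j ∈ Icc 1 k, (1 - Q^j * x))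
      = ∑ m ∈ range (k+1), Q^(k*(k+1)/2) * (Q^(m*(m+1)/2) * qB Q k m * (-x)^m) := by
    rw [prodA hQ x k, Finset.mul_sum]
  rw [hD, hA, ← Finset.sum_sub_distrib]
  -- step 4: per-m identity
  refine sum_congr rfl fun m hm => ?_
  have hmk : m ≤ k := by have := mem_range.mp hm; omega
  have inner : ∀ ℓ ∈ Icc 1 m,
      (-1:ℝ)^(ℓ-1) * (qP Q (ℓ+k) / (qP Q k * qP Q (ℓ-1)))
        * (Q^((m-ℓ)*((m-ℓ)+1)/2 + (k-ℓ-(m-ℓ))*((k-ℓ-(m-ℓ))+1)/2) * qB Q k (m-ℓ) * qB Q k (k-ℓ-(m-ℓ))) * x^(ℓ+(m-ℓ))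
      = ((-1:ℝ)^(ℓ-1) * (qP Q (ℓ+k) / (qP Q k * qP Q (ℓ-1)))
          * Q^((m-ℓ)*((m-ℓ)+1)/2) * qB Q k (m-ℓ))
        * (Q^((k-m)*((k-m)+1)/2) * qB Q k (k-m) * x^m) := by
    intro ℓ hℓ
    have hl := mem_Icc.mp hℓ
    rw [show k-ℓ-(m-ℓ) = k-m by omega, show ℓ+(m-ℓ) = m by omega, pow_add]
    ring
  rw [sum_congr rfl inner, ← Finset.sum_mul, Phi hQ k m]
  -- final scalar identity
  rcases Nat.eq_zero_or_pos m with rfl | hm1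
  · norm_num [qB_zero hQ, qB_self hQ]
  · have hsign : (-1:ℝ)^m = -(-1:ℝ)^(m-1) := by
      obtain ⟨m', rfl⟩ : ∃ m', m = m'+1 := ⟨m-1, by omega⟩
      rw [pow_succ]
      norm_num
    have hexp : Q^(m*(k+1)) * Q^((k-m)*((k-m)+1)/2) = Q^(k*(k+1)/2) * Q^(m*(m+1)/2) := by
      rw [← pow_add, ← pow_add, expid hmk]
    rw [neg_pow x m, qB_symm hQ hmk, hsign]
    linear_combination (-((-1:ℝ)^(m-1)) * x^m * qB Q k m) * hexp
end

/-- Telescoping identity: `∑_{ℓ≥1} B_ℓ(x) = -1 + ∏_{j=1}^k (1 - Q^j x)/(1 - Q^{-j} x)`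
(the sum has only the terms `1 ≤ ℓ ≤ k`). -/
theorem stmt16 (Q : ℝ) (hQ : 1 < Q) (k : ℕ) (x : ℝ)
    (hx : ∀ j ∈ Finset.Icc 1 k, x ≠ Q ^ j) :
    ∑ ℓ ∈ Finset.Icc 1 k, Bfun Q k ℓ x =
      -1 + ∏ j ∈ Finset.Icc 1 k, (1 - Q ^ (j : ℤ) * x) / (1 - Q ^ (-(j : ℤ)) * x) := by
  have hQ0 : (0:ℝ) < Q := by linarith
  have hpow : ∀ j : ℕ, (Q:ℝ)^j ≠ 0 := fun j => pow_ne_zero j (by linarith)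
  have hDf : ∀ j ∈ Icc 1 k, Q^j - x ≠ 0 := fun j hj => sub_ne_zero.mpr (Ne.symm (hx j hj))
  have hD : Dpoly Q k x ≠ 0 := by
    rw [Dpoly]; exact Finset.prod_ne_zero_iff.mpr hDf
  have hL : ∑ ℓ ∈ Icc 1 k, Bfun Q k ℓ x
      = (∑ ℓ ∈ Icc 1 k, ((-1:ℝ)^(ℓ-1) * (qP Q (ℓ+k)/(qP Q k * qP Q (ℓ-1))) * x^ℓ * Ypoly Q k ℓ x)) / Dpoly Q k x := by
    rw [Finset.sum_div]
    refine sum_congr rfl fun ℓ hℓ => ?_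
    rw [Bfun, if_pos (mem_Icc.mp hℓ).2]
  have hstep : ∀ j ∈ Icc 1 k, (1 - Q^((j:ℤ))*x)/(1 - Q^(-(j:ℤ))*x)
      = Q^j * (1 - Q^j*x) / (Q^j - x) := by
    intro j hj
    have hjx := hDf j hj
    rw [zpow_neg, zpow_natCast]
    rw [show (1 - (Q^j)⁻¹ * x) = (Q^j - x)/(Q^j) from by field_simp,
        div_div_eq_mul_div]
    ring
  have hprod : ∏ j ∈ Icc 1 k, (1 - Q^((j:ℤ))*x)/(1 - Q^(-(j:ℤ))*x)
      = Q^(k*(k+1)/2) * (∏ j ∈ Icc 1 k, (1 - Q^j*x)) / Dpoly Q k x := by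
    rw [prod_congr rfl hstep, Finset.prod_div_distrib, Finset.prod_mul_distrib,
        Finset.prod_pow_eq_pow_sum, gauss, Dpoly]
  rw [hL, hprod, keylem hQ k x]
  field_simp
  ring
end
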